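/- Let k ≠ 0 be a real constant and let u, w : ℝ² → ℝ be twice continuously differentiable functions of (x₁, x₂) satisfying the Bäcklund relations ∂u/∂x₂ = k⁻¹ sin(u − w) and ∂u/∂x₁ = ∂w/∂x₁ + k sin u at every point, and suppose cos(u(x) − w(x)) ≥ 0 for every point x. Then 1 − k² (∂u/∂x₂)² = cos²(u − w) ≥ 0 at every point and u satisfies the nonlinear wave equation ∂²u/∂x₁∂x₂ = √(1 − k² (∂u/∂x₂)²) · sin u at every point. -/

import Mathlib

/-- Partial derivative with respect to the first variable. -/
noncomputable def pd1 (u : ℝ × ℝ → ℝ) (p : ℝ × ℝ) : ℝ := deriv (fun x₁ => u (x₁, p.2)) p.1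

/-- Partial derivative with respect to the second variable. -/
noncomputable def pd2 (u : ℝ × ℝ → ℝ) (p : ℝ × ℝ) : ℝ := deriv (fun x₂ => u (p.1, x₂)) p.2

lemma hasDerivAt_fst {u : ℝ × ℝ → ℝ} (hu : Differentiable ℝ u) (p : ℝ × ℝ) :
    HasDerivAt (fun x₁ => u (x₁, p.2)) (fderiv ℝ u p ((1:ℝ), (0:ℝ))) p.1 := by
  have h : HasDerivAt (fun x₁ : ℝ => (x₁, p.2)) ((1 : ℝ), (0 : ℝ)) p.1 :=
    (hasDerivAt_id p.1).prodMk (hasDerivAt_const _ _)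
  have h2 : HasFDerivAt u (fderiv ℝ u p) (p.1, p.2) := by
    simpa using (hu p).hasFDerivAt
  simpa [Function.comp_def] using h2.comp_hasDerivAt p.1 h

lemma hasDerivAt_snd {u : ℝ × ℝ → ℝ} (hu : Differentiable ℝ u) (p : ℝ × ℝ) :
    HasDerivAt (fun x₂ => u (p.1, x₂)) (fderiv ℝ u p ((0:ℝ), (1:ℝ))) p.2 := by
  have h : HasDerivAt (fun x₂ : ℝ => (p.1, x₂)) ((0 : ℝ), (1 : ℝ)) p.2 :=
    (hasDerivAt_const _ _).prodMk (hasDerivAt_id p.2)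
  have h2 : HasFDerivAt u (fderiv ℝ u p) (p.1, p.2) := by
    simpa using (hu p).hasFDerivAt
  simpa [Function.comp_def] using h2.comp_hasDerivAt p.2 h

lemma pd1_eq {u : ℝ × ℝ → ℝ} (hu : Differentiable ℝ u) (p : ℝ × ℝ) :
    pd1 u p = fderiv ℝ u p ((1:ℝ), (0:ℝ)) := (hasDerivAt_fst hu p).deriv

lemma pd2_eq {u : ℝ × ℝ → ℝ} (hu : Differentiable ℝ u) (p : ℝ × ℝ) :
    pd2 u p = fderiv ℝ u p ((0:ℝ), (1:ℝ)) := (hasDerivAt_snd hu p).deriv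

lemma pd2_pd1 {u : ℝ × ℝ → ℝ} (hu : ContDiff ℝ 2 u) (p : ℝ × ℝ) :
    pd2 (pd1 u) p = fderiv ℝ (fderiv ℝ u) p ((0:ℝ), (1:ℝ)) ((1:ℝ), (0:ℝ)) := by
  have hud : Differentiable ℝ u := hu.differentiable (by norm_num)
  have hfd : Differentiable ℝ (fderiv ℝ u) :=
    (hu.fderiv_right (m := 1) (by norm_num)).differentiable one_ne_zero
  have hfun : pd1 u = fun q => fderiv ℝ u q ((1:ℝ), (0:ℝ)) := by
    funext q; exact pd1_eq hud q
  rw [hfun]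
  have h1 : HasDerivAt (fun x₂ : ℝ => (p.1, x₂)) ((0 : ℝ), (1 : ℝ)) p.2 :=
    (hasDerivAt_const _ _).prodMk (hasDerivAt_id p.2)
  have h2 : HasFDerivAt (fun q : ℝ × ℝ => fderiv ℝ u q ((1:ℝ), (0:ℝ)))
      ((ContinuousLinearMap.apply ℝ ℝ ((1:ℝ), (0:ℝ))).comp (fderiv ℝ (fderiv ℝ u) p))
      (p.1, p.2) := by
    have := (ContinuousLinearMap.apply ℝ ℝ ((1:ℝ), (0:ℝ))).hasFDerivAt.comp p
      (hfd p).hasFDerivAt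
    simpa [Function.comp_def] using this
  have h3 := h2.comp_hasDerivAt p.2 h1
  simpa [pd2, Function.comp_def] using h3.deriv

/-- If `u`, `w` satisfy the Bäcklund relations
`u_{x₂} = k⁻¹ sin(u − w)`, `u_{x₁} = w_{x₁} + k sin u` with `k ≠ 0`, and
`cos(u − w) ≥ 0` everywhere, then `1 − k² u_{x₂}² = cos²(u − w) ≥ 0` and `u`
satisfies the nonlinear wave equation `u_{x₁x₂} = √(1 − k² u_{x₂}²) sin u`. -/
theorem backlund_implies_nonlinear_wave (k : ℝ) (hk : k ≠ 0)
    (u w : ℝ × ℝ → ℝ) (hu : ContDiff ℝ 2 u) (hw : ContDiff ℝ 2 w)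
    (h1 : ∀ p : ℝ × ℝ, pd2 u p = k⁻¹ * Real.sin (u p - w p))
    (h2 : ∀ p : ℝ × ℝ, pd1 u p = pd1 w p + k * Real.sin (u p))
    (hcos : ∀ p : ℝ × ℝ, 0 ≤ Real.cos (u p - w p)) :
    ∀ p : ℝ × ℝ,
      1 - k ^ 2 * (pd2 u p) ^ 2 = (Real.cos (u p - w p)) ^ 2 ∧
      0 ≤ 1 - k ^ 2 * (pd2 u p) ^ 2 ∧
      pd2 (pd1 u) p = Real.sqrt (1 - k ^ 2 * (pd2 u p) ^ 2) * Real.sin (u p) := by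
  intro p
  have hud : Differentiable ℝ u := hu.differentiable (by norm_num)
  have hwd : Differentiable ℝ w := hw.differentiable (by norm_num)
  have key1 : 1 - k ^ 2 * (pd2 u p) ^ 2 = (Real.cos (u p - w p)) ^ 2 := by
    rw [h1 p]
    have hs := Real.sin_sq_add_cos_sq (u p - w p)
    field_simp
    nlinarith [hs]
  refine ⟨key1, by rw [key1]; positivity, ?_⟩
  -- mixed partial: pd2 (pd1 u) p = f'' e2 e1 = f'' e1 e2 = pd1 (pd2 u) p
  have hfd : Differentiable ℝ (fderiv ℝ u) :=
    (hu.fderiv_right (m := 1) (by norm_num)).differentiable one_ne_zero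
  have hsymm := second_derivative_symmetric
    (fun y => (hud y).hasFDerivAt) (hfd p).hasFDerivAt ((1:ℝ), (0:ℝ)) ((0:ℝ), (1:ℝ))
  -- compute pd1 (pd2 u) p directly
  have hpd2fun : pd2 u = fun q => k⁻¹ * Real.sin (u q - w q) := funext h1
  have hder : HasDerivAt (fun x₁ => pd2 u (x₁, p.2))
      (Real.cos (u p - w p) * Real.sin (u p)) p.1 := by
    rw [hpd2fun]
    have hu1 : HasDerivAt (fun x₁ => u (x₁, p.2)) (pd1 u p) p.1 := by
      rw [pd1_eq hud p]; exact hasDerivAt_fst hud p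
    have hw1 : HasDerivAt (fun x₁ => w (x₁, p.2)) (pd1 w p) p.1 := by
      rw [pd1_eq hwd p]; exact hasDerivAt_fst hwd p
    have := (((hu1.sub hw1).sin).const_mul k⁻¹)
    convert this using 1
    · rfl
    · rfl
    · rfl
    rw [h2 p]
    field_simp
    simp only [Pi.sub_apply, Prod.mk.eta]
    ring
  have hpd1pd2 : pd1 (pd2 u) p = Real.cos (u p - w p) * Real.sin (u p) := hder.deriv
  -- pd1 (pd2 u) p in fderiv form
  have hpd2fd : pd2 u = fun q => fderiv ℝ u q ((0:ℝ), (1:ℝ)) := funext (pd2_eq hud)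
  have hpd1pd2' : pd1 (pd2 u) p = fderiv ℝ (fderiv ℝ u) p ((1:ℝ), (0:ℝ)) ((0:ℝ), (1:ℝ)) := by
    rw [hpd2fd]
    unfold pd1
    have hl : HasDerivAt (fun x₁ : ℝ => (x₁, p.2)) ((1 : ℝ), (0 : ℝ)) p.1 :=
      (hasDerivAt_id p.1).prodMk (hasDerivAt_const _ _)
    have hg : HasFDerivAt (fun q : ℝ × ℝ => fderiv ℝ u q ((0:ℝ), (1:ℝ)))
        ((ContinuousLinearMap.apply ℝ ℝ ((0:ℝ), (1:ℝ))).comp (fderiv ℝ (fderiv ℝ u) p))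
        (p.1, p.2) := by
      have := (ContinuousLinearMap.apply ℝ ℝ ((0:ℝ), (1:ℝ))).hasFDerivAt.comp p
        (hfd p).hasFDerivAt
      simpa [Function.comp_def] using this
    simpa [Function.comp_def] using (hg.comp_hasDerivAt p.1 hl).deriv
  rw [pd2_pd1 hu p, ← hsymm, ← hpd1pd2', hpd1pd2, key1,
    Real.sqrt_sq (hcos p)]
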